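/- In a dagger category, if f∂ : B ⟶ A is a †-Drazin inverse of f : A ⟶ B, then f∂ is itself †-Drazin: the map f ≫ f∂ ≫ f : A ⟶ B is a †-Drazin inverse of f∂, and axiom [D†.1] for this pair holds with k = 1. -/
import Mathlib


open CategoryTheory

universe v u

/-- A dagger on a category: an identity-on-objects contravariant involution. -/
structure Dagger (C : Type u) [Category.{v} C] where
  dag : ∀ {X Y : C}, (X ⟶ Y) → (Y ⟶ X)
  dag_id : ∀ X : C, dag (𝟙 X) = 𝟙 X
  dag_comp : ∀ {X Y Z : C} (f : X ⟶ Y) (g : Y ⟶ Z), dag (f ≫ g) = dag g ≫ dag f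
  dag_dag : ∀ {X Y : C} (f : X ⟶ Y), dag (dag f) = f

/-- Iterated composition power of an endomorphism, with `cpow x 0 = 𝟙 A`. -/
def cpow {C : Type u} [Category.{v} C] {A : C} (x : A ⟶ A) : ℕ → (A ⟶ A)
  | 0 => 𝟙 A
  | n + 1 => cpow x n ≫ x

/-- `p` is a †-Drazin inverse of `f`. -/
def IsDagDrazinInv {C : Type u} [Category.{v} C] (D : Dagger C)
    {A B : C} (f : A ⟶ B) (p : B ⟶ A) : Prop :=
  (∃ k : ℕ, cpow (f ≫ D.dag f) k ≫ f ≫ p = cpow (f ≫ D.dag f) k ∧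
    p ≫ f ≫ cpow (D.dag f ≫ f) k = cpow (D.dag f ≫ f) k) ∧
  p ≫ f ≫ p = p ∧
  D.dag (f ≫ p) = f ≫ p ∧
  D.dag (p ≫ f) = p ≫ f

/-- If `p` is a †-Drazin inverse of `f`, then `f ≫ p ≫ f` is a †-Drazin inverse of `p`,
with axiom [D†.1] holding for `k = 1`. -/
theorem dagDrazinInv_dagDrazin {C : Type u} [Category.{v} C] (D : Dagger C)
    {A B : C} (f : A ⟶ B) (p : B ⟶ A) (h : IsDagDrazinInv D f p) :
    IsDagDrazinInv D p (f ≫ p ≫ f) ∧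
    (p ≫ D.dag p) ≫ p ≫ (f ≫ p ≫ f) = p ≫ D.dag p ∧
    (f ≫ p ≫ f) ≫ p ≫ (D.dag p ≫ p) = D.dag p ≫ p := by
  obtain ⟨-, h2, h3, h4⟩ := h
  have h2' : ∀ {Z : C} (g : A ⟶ Z), p ≫ f ≫ p ≫ g = p ≫ g := by
    intro Z g
    rw [show p ≫ f ≫ p ≫ g = (p ≫ f ≫ p) ≫ g by simp, h2]
  have hdp1 : D.dag p ≫ p ≫ f = D.dag p := by
    calc D.dag p ≫ p ≫ f = D.dag p ≫ D.dag (p ≫ f) := by rw [h4]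
    _ = D.dag ((p ≫ f) ≫ p) := (D.dag_comp (p ≫ f) p).symm
    _ = D.dag p := by rw [Category.assoc, h2]
  have hdp2 : f ≫ p ≫ D.dag p = D.dag p := by
    calc f ≫ p ≫ D.dag p = (f ≫ p) ≫ D.dag p := by rw [Category.assoc]
    _ = D.dag (f ≫ p) ≫ D.dag p := by rw [h3]
    _ = D.dag (p ≫ (f ≫ p)) := (D.dag_comp p (f ≫ p)).symm
    _ = D.dag p := by rw [h2]
  have hdp1' : ∀ {Z : C} (g : B ⟶ Z), D.dag p ≫ p ≫ f ≫ g = D.dag p ≫ g := by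
    intro Z g
    rw [show D.dag p ≫ p ≫ f ≫ g = (D.dag p ≫ p ≫ f) ≫ g by simp, hdp1]
  have hdp2' : ∀ {Z : C} (g : B ⟶ Z), f ≫ p ≫ D.dag p ≫ g = D.dag p ≫ g := by
    intro Z g
    rw [show f ≫ p ≫ D.dag p ≫ g = (f ≫ p ≫ D.dag p) ≫ g by simp, hdp2]
  have key1 : (p ≫ D.dag p) ≫ p ≫ (f ≫ p ≫ f) = p ≫ D.dag p := by
    simp only [Category.assoc, hdp1', hdp1]
  have key2 : (f ≫ p ≫ f) ≫ p ≫ (D.dag p ≫ p) = D.dag p ≫ p := by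
    simp only [Category.assoc, h2', hdp2']
  refine ⟨⟨⟨1, ?_, ?_⟩, ?_, ?_, ?_⟩, key1, key2⟩
  · simpa [cpow] using key1
  · simpa [cpow] using key2
  · simp only [Category.assoc, h2']
  · simp only [Category.assoc, h2']
    rw [show p ≫ f ≫ p ≫ f = p ≫ (f ≫ p ≫ f) by simp] at *
    simp only [h2', h4]
  · simp only [Category.assoc, h2, h3]
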